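/- Let X be a set and K : X × X → ℂ a bounded function satisfying condition (A1). Assume that for every n, all pairwise distinct x₁, …, xₙ ∈ X, every continuous V : ℂⁿ → [0,∞), every continuous nondecreasing φ : [0,∞) → [0,∞) with lim_{t→∞} φ(t) = ∞, and every μ > 0, there exists c₀ ∈ ℓ¹(X) with support contained in {x₁, …, xₙ} minimizing c ↦ V(Φ(c)(x₁), …, Φ(c)(xₙ)) + μ φ(‖c‖_{ℓ¹(X)}) over ℓ¹(X). Then for every n, all pairwise distinct x₁, …, xₙ ∈ X, every y ∈ ℂⁿ, and every c ∈ ℓ¹(X) with Φ(c)(x_i) = y_i for all i, one has ‖c‖_{ℓ¹(X)} ≥ ‖(K[x])^{-1} y‖₁. -/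

import Mathlib

open Matrix Filter Topology

/-- The kernel matrix `K[x]`, with `(j,k)` entry `K(x_k, x_j)`. -/
noncomputable def kernelMatrix {X : Type*} (K : X → X → ℂ) {n : ℕ} (x : Fin n → X) :
    Matrix (Fin n) (Fin n) ℂ := Matrix.of fun j k => K (x k) (x j)

/-- The `ℓ¹` norm of a vector in `ℂⁿ`. -/
noncomputable def l1norm {n : ℕ} (v : Fin n → ℂ) : ℝ := ∑ j, ‖v j‖

/-- Condition (A1): every kernel matrix at finitely many pairwise distinct points is
nonsingular. -/
def CondA1 {X : Type*} (K : X → X → ℂ) : Prop :=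
  ∀ (n : ℕ) (x : Fin n → X), Function.Injective x → IsUnit (kernelMatrix K x).det

/-- `Φ(c)(x) = ∑_{t ∈ X} c_t K(t, x)` for `c ∈ ℓ¹(X)`. -/
noncomputable def PhiMap {X : Type*} (K : X → X → ℂ) (c : X → ℂ) (x : X) : ℂ :=
  ∑' t, c t * K t x

lemma aux_tsum {X : Type*} {n : ℕ} {x : Fin n → X} (hx : Function.Injective x)
    {E : Type*} [AddCommMonoid E] [TopologicalSpace E] [T2Space E] (f : X → E)
    (hf : ∀ t, f t ≠ 0 → ∃ i, t = x i) :
    ∑' t, f t = ∑ k, f (x k) := by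
  classical
  rw [tsum_eq_sum (s := Finset.univ.image x) ?_]
  · exact Finset.sum_image (fun i _ j _ h => hx h)
  · intro t ht
    by_contra h
    obtain ⟨i, rfl⟩ := hf t h
    exact ht (Finset.mem_image_of_mem _ (Finset.mem_univ i))

lemma l1norm_nonneg {n : ℕ} (v : Fin n → ℂ) : 0 ≤ l1norm v :=
  Finset.sum_nonneg fun _ _ => norm_nonneg _

lemma l1norm_add_le {n : ℕ} (u v : Fin n → ℂ) : l1norm (u + v) ≤ l1norm u + l1norm v := by
  rw [l1norm, l1norm, l1norm, ← Finset.sum_add_distrib]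
  exact Finset.sum_le_sum fun j _ => norm_add_le _ _

lemma l1norm_mulVec_le {n : ℕ} (B : Matrix (Fin n) (Fin n) ℂ) (w : Fin n → ℂ) :
    l1norm (B *ᵥ w) ≤ (∑ j, ∑ k, ‖B j k‖) * l1norm w := by
  simp only [l1norm, Matrix.mulVec, dotProduct]
  calc ∑ j, ‖∑ k, B j k * w k‖
      ≤ ∑ j, ∑ k, ‖B j k‖ * ‖w k‖ := by
        refine Finset.sum_le_sum fun j _ => ?_
        refine le_trans (norm_sum_le _ _) ?_
        refine Finset.sum_le_sum fun k _ => ?_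
        exact le_of_eq (norm_mul _ _)
    _ ≤ ∑ j, ∑ k, ‖B j k‖ * (∑ m, ‖w m‖) := by
        refine Finset.sum_le_sum fun j _ => Finset.sum_le_sum fun k _ => ?_
        exact mul_le_mul_of_nonneg_left
          (Finset.single_le_sum (f := fun m => ‖w m‖) (fun m _ => norm_nonneg _) (Finset.mem_univ k))
          (norm_nonneg _)
    _ = (∑ j, ∑ k, ‖B j k‖) * ∑ m, ‖w m‖ := by
        rw [Finset.sum_mul]
        exact Finset.sum_congr rfl fun j _ => (Finset.sum_mul _ _ _).symm

theorem stmt_8 {X : Type*} (K : X → X → ℂ) (M : ℝ)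
    (hK : ∀ s t, ‖K s t‖ ≤ M) (hA1 : CondA1 K)
    (hreg : ∀ (n : ℕ) (x : Fin n → X), Function.Injective x →
      ∀ V : (Fin n → ℂ) → ℝ, Continuous V → (∀ v, 0 ≤ V v) →
      ∀ φ : ℝ → ℝ, ContinuousOn φ (Set.Ici 0) → MonotoneOn φ (Set.Ici 0) →
        (∀ t ∈ Set.Ici (0 : ℝ), 0 ≤ φ t) → Tendsto φ atTop atTop →
      ∀ μ : ℝ, 0 < μ →
      ∃ c₀ : X → ℂ, Summable (fun t => ‖c₀ t‖) ∧
        (∀ t, c₀ t ≠ 0 → ∃ i, t = x i) ∧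
        ∀ c : X → ℂ, Summable (fun t => ‖c t‖) →
          V (fun i => PhiMap K c₀ (x i)) + μ * φ (∑' t, ‖c₀ t‖) ≤
            V (fun i => PhiMap K c (x i)) + μ * φ (∑' t, ‖c t‖)) :
    ∀ (n : ℕ) (x : Fin n → X), Function.Injective x → ∀ y : Fin n → ℂ,
      ∀ c : X → ℂ, Summable (fun t => ‖c t‖) →
        (∀ i, PhiMap K c (x i) = y i) →
        l1norm ((kernelMatrix K x)⁻¹ *ᵥ y) ≤ ∑' t, ‖c t‖ := by
  intro n x hx y c hc hint
  set A := kernelMatrix K x with hA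
  set B := A⁻¹ with hB
  have hBA : B * A = 1 := Matrix.nonsing_inv_mul A (hA1 n x hx)
  set C : ℝ := ∑ j, ∑ k, ‖B j k‖ with hCdef
  have hC0 : 0 ≤ C :=
    Finset.sum_nonneg fun _ _ => Finset.sum_nonneg fun _ _ => norm_nonneg _
  set N : ℝ := ∑' t, ‖c t‖ with hNdef
  have hN0 : 0 ≤ N := tsum_nonneg fun _ => norm_nonneg _
  refine le_of_forall_pos_le_add ?_
  intro ε hε
  set lam : ℝ := (C * N + 1) / ε with hlamdef
  have hCN1 : (0:ℝ) < C * N + 1 := by nlinarith [mul_nonneg hC0 hN0]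
  have hlam : 0 < lam := div_pos hCN1 hε
  -- apply the hypothesis with V v = lam * ∑ |v j - y j| and φ = id
  obtain ⟨c₀, hc₀sum, hc₀supp, hmin⟩ :=
    hreg n x hx (fun v => lam * ∑ j, ‖v j - y j‖)
      (continuous_const.mul (continuous_finset_sum _ fun j _ =>
        continuous_norm.comp ((continuous_apply j).sub continuous_const)))
      (fun v => mul_nonneg hlam.le
        (Finset.sum_nonneg fun _ _ => norm_nonneg _))
      id continuousOn_id (fun a _ b _ h => h) (fun t ht => ht) tendsto_id
      1 one_pos
  have hmin' := hmin c hc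
  simp only [id_eq, one_mul] at hmin'
  have hzero : (∑ j, ‖PhiMap K c (x j) - y j‖) = 0 := by
    refine Finset.sum_eq_zero fun j _ => ?_
    rw [hint j, sub_self, norm_zero]
  rw [hzero, mul_zero, zero_add] at hmin'
  -- the vector associated to c₀
  set a₀ : Fin n → ℂ := fun k => c₀ (x k) with ha₀
  have htsum_c₀ : (∑' t, ‖c₀ t‖) = l1norm a₀ := by
    rw [l1norm]
    exact aux_tsum hx (fun t => ‖c₀ t‖)
      (fun t ht => hc₀supp t (fun h => ht (by simp [h])))
  set v₀ : Fin n → ℂ := fun j => PhiMap K c₀ (x j) with hv₀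
  have hAv : A *ᵥ a₀ = v₀ := by
    funext j
    rw [hv₀]
    simp only [Matrix.mulVec, dotProduct]
    rw [PhiMap, aux_tsum hx (fun t => c₀ t * K t (x j))
      (fun t ht => hc₀supp t (fun h => ht (by simp [h])))]
    refine Finset.sum_congr rfl fun k _ => ?_
    rw [hA, kernelMatrix, mul_comm]
    rfl
  have ha₀B : a₀ = B *ᵥ v₀ := by
    rw [← hAv, Matrix.mulVec_mulVec, hBA, Matrix.one_mulVec]
  -- extract the two estimates from the minimization
  rw [htsum_c₀] at hmin'
  have h1 : l1norm a₀ ≤ N := by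
    have := le_trans (le_add_of_nonneg_left (mul_nonneg hlam.le
      (Finset.sum_nonneg fun _ _ => norm_nonneg _))) hmin'
    linarith [this]
  have h2 : (∑ j, ‖v₀ j - y j‖) ≤ N / lam := by
    rw [le_div_iff₀ hlam, mul_comm]
    have hl1a : 0 ≤ l1norm a₀ := l1norm_nonneg a₀
    linarith [hmin']
  -- put everything together
  have hsplit : B *ᵥ y = a₀ + B *ᵥ (y - v₀) := by
    rw [ha₀B, ← Matrix.mulVec_add, add_sub_cancel]
  calc l1norm (B *ᵥ y) ≤ l1norm a₀ + l1norm (B *ᵥ (y - v₀)) := by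
        rw [hsplit]; exact l1norm_add_le _ _
    _ ≤ l1norm a₀ + C * l1norm (y - v₀) := by
        exact add_le_add_right (l1norm_mulVec_le B _) _
    _ ≤ N + C * (N / lam) := by
        refine add_le_add h1 (mul_le_mul_of_nonneg_left ?_ hC0)
        rw [l1norm]
        refine le_trans (le_of_eq ?_) h2
        exact Finset.sum_congr rfl fun j _ => by
          simp only [Pi.sub_apply]
          exact norm_sub_rev _ _
    _ ≤ N + ε := by
        refine add_le_add_right ?_ N
        have heq : C * (N / lam) = (C * N) * ε / (C * N + 1) := by
          rw [hlamdef]; field_simp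
        rw [heq, div_le_iff₀ hCN1]
        nlinarith [hε.le]
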